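/- arXiv:2406.01206 — 6 statements merged into one kernel-verified Lean document; each statement's English description precedes it below -/
import Mathlib

section
/- Core dissipation inequality of Theorem 1 (Eq. (11)): Let m be a positive integer and ε > 0. Let η, ζ : ℝ → ℝ^m be differentiable curves (η(t) = h_p(x_p(t)) is the plant output trajectory, ζ(t) = h_c(x_c(t)) is the state-dependent part of the controller output trajectory), let g_1, …, g_m : ℝ → ℝ be continuous functions (the channel-wise controller feedthrough), and let V_p, V_c : ℝ → ℝ be differentiable functions (the plant and controller storage functions evaluated along the trajectories). Define the interconnection inputs u_c(t) = η(t) and u_p(t) = ζ(t) + (g_1(η_1(t)), …, g_m(η_m(t))). Assume for all t ∈ ℝ: V_p'(t) ≤ ⟨u_p(t), η'(t)⟩ − ε‖η'(t)‖² (OSNI dissipation of the plant along the trajectory) and V_c'(t) ≤ ⟨u_c(t), ζ'(t)⟩ (NI dissipation of the controller along the trajectory). Then the Lur'e–Postnikov-like function W(t) = V_p(t) + V_c(t) − ⟨η(t), ζ(t)⟩ − Σ_{k=1}^m ∫_0^{η_k(t)} g_k(ξ) dξ is differentiable at every t and satisfies W'(t) ≤ −ε‖η'(t)‖² ≤ 0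 for all t ∈ ℝ. -/
open scoped RealInnerProductSpace

/-- Core dissipation inequality of Theorem 1 (Eq. (11)). -/
theorem stmt_0 (m : ℕ) (hm : 0 < m) (ε : ℝ) (hε : 0 < ε)
    (η ζ η' ζ' : ℝ → EuclideanSpace ℝ (Fin m))
    (hη : ∀ t, HasDerivAt η (η' t) t)
    (hζ : ∀ t, HasDerivAt ζ (ζ' t) t)
    (g : Fin m → ℝ → ℝ) (hg : ∀ k, Continuous (g k))
    (Vp Vc Vp' Vc' : ℝ → ℝ)
    (hVp : ∀ t, HasDerivAt Vp (Vp' t) t)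
    (hVc : ∀ t, HasDerivAt Vc (Vc' t) t)
    (uc up : ℝ → EuclideanSpace ℝ (Fin m))
    (huc : ∀ t, uc t = η t)
    (hup : ∀ t k, up t k = ζ t k + g k (η t k))
    (hOSNI : ∀ t, Vp' t ≤ ⟪up t, η' t⟫ - ε * ‖η' t‖ ^ 2)
    (hNI : ∀ t, Vc' t ≤ ⟪uc t, ζ' t⟫) :
    ∀ t : ℝ, ∃ w : ℝ,
      HasDerivAt
        (fun s => Vp s + Vc s - ⟪η s, ζ s⟫ -
          ∑ k : Fin m, ∫ ξ in (0:ℝ)..(η s k), g k ξ) w t ∧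
      w ≤ -ε * ‖η' t‖ ^ 2 ∧ -ε * ‖η' t‖ ^ 2 ≤ 0 := by
  intro t
  -- coordinate derivatives
  have hcoord : ∀ k : Fin m, HasDerivAt (fun s => η s k) (η' t k) t := by
    intro k
    exact (EuclideanSpace.proj (𝕜 := ℝ) k).hasFDerivAt.comp_hasDerivAt t (hη t)
  -- derivative of each integral term
  have hint : ∀ k : Fin m,
      HasDerivAt (fun s => ∫ ξ in (0:ℝ)..(η s k), g k ξ)
        (g k (η t k) * η' t k) t := by
    intro k
    exact (((hg k).integral_hasStrictDerivAt 0 (η t k)).hasDerivAt).comp t (hcoord k)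
  have hsum : HasDerivAt (fun s => ∑ k : Fin m, ∫ ξ in (0:ℝ)..(η s k), g k ξ)
      (∑ k : Fin m, g k (η t k) * η' t k) t :=
    HasDerivAt.fun_sum (fun k _ => hint k)
  have hinner : HasDerivAt (fun s => ⟪η s, ζ s⟫)
      (⟪η t, ζ' t⟫ + ⟪η' t, ζ t⟫) t := (hη t).inner ℝ (hζ t)
  refine ⟨Vp' t + Vc' t - (⟪η t, ζ' t⟫ + ⟪η' t, ζ t⟫) -
      ∑ k : Fin m, g k (η t k) * η' t k,
    (((hVp t).add (hVc t)).sub hinner).sub hsum, ?_, ?_⟩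
  · have h1 := hOSNI t
    have h2 := hNI t
    have hup' : ⟪up t, η' t⟫ = ⟪ζ t, η' t⟫ + ∑ k : Fin m, g k (η t k) * η' t k := by
      simp only [PiLp.inner_apply, RCLike.inner_apply, starRingEnd_apply, star_trivial]
      rw [← Finset.sum_add_distrib]
      congr 1; ext k; rw [hup t k]; ring
    have huc' : ⟪uc t, ζ' t⟫ = ⟪η t, ζ' t⟫ := by rw [huc t]
    have hsym : ⟪ζ t, η' t⟫ = ⟪η' t, ζ t⟫ := real_inner_comm _ _
    rw [hup', hsym] at h1
    rw [huc'] at h2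
    linarith
  · have : 0 ≤ ε * ‖η' t‖ ^ 2 := by positivity
    linarith
end

section
/- Core dissipation inequality of Theorem 2: Let m be a positive integer and ε > 0. Let η, ζ : ℝ → ℝ^m be differentiable curves (η(t) = h_p(x_p(t)) is the plant output trajectory, ζ(t) = h_c(x_c(t)) is the state-dependent part of the controller output trajectory), let g_1, …, g_m : ℝ → ℝ be continuous functions (the channel-wise controller feedthrough), and let V_p, V_c : ℝ → ℝ be differentiable functions (storage functions along the trajectories). Define u_c(t) = η(t) and u_p(t) = ζ(t) + (g_1(η_1(t)), …, g_m(η_m(t))). Assume for all t ∈ ℝ: V_p'(t) ≤ ⟨u_p(t), η'(t)⟩ (NI dissipation of the plant) and V_c'(t) ≤ ⟨u_c(t), ζ'(t)⟩ − ε‖ζ'(t)‖² (OSNI dissipation of the controller). Then W(t) = V_p(t) + V_c(t) − ⟨η(t), ζ(t)⟩ − Σ_{k=1}^m ∫_0^{η_k(t)} g_k(ξ) dξ is differentiable at every t and satisfies W'(t) ≤ −ε‖ζ'(t)‖² ≤ 0 for all t ∈ ℝ. -/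
open scoped RealInnerProductSpace

/-- Core dissipation inequality of Theorem 2: NI plant with OSNI controller. -/
theorem stmt_1 (m : ℕ) (hm : 0 < m) (ε : ℝ) (hε : 0 < ε)
    (η ζ η' ζ' : ℝ → EuclideanSpace ℝ (Fin m))
    (hη : ∀ t, HasDerivAt η (η' t) t)
    (hζ : ∀ t, HasDerivAt ζ (ζ' t) t)
    (g : Fin m → ℝ → ℝ) (hg : ∀ k, Continuous (g k))
    (Vp Vc Vp' Vc' : ℝ → ℝ)
    (hVp : ∀ t, HasDerivAt Vp (Vp' t) t)
    (hVc : ∀ t, HasDerivAt Vc (Vc' t) t)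
    (uc up : ℝ → EuclideanSpace ℝ (Fin m))
    (huc : ∀ t, uc t = η t)
    (hup : ∀ t k, up t k = ζ t k + g k (η t k))
    (hNI : ∀ t, Vp' t ≤ ⟪up t, η' t⟫)
    (hOSNI : ∀ t, Vc' t ≤ ⟪uc t, ζ' t⟫ - ε * ‖ζ' t‖ ^ 2) :
    ∀ t : ℝ, ∃ w : ℝ,
      HasDerivAt
        (fun s => Vp s + Vc s - ⟪η s, ζ s⟫ -
          ∑ k : Fin m, ∫ ξ in (0:ℝ)..(η s k), g k ξ) w t ∧
      w ≤ -ε * ‖ζ' t‖ ^ 2 ∧ -ε * ‖ζ' t‖ ^ 2 ≤ 0 := by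
  intro t
  -- coordinate derivatives
  have hcoord : ∀ k : Fin m, HasDerivAt (fun s => η s k) (η' t k) t := by
    intro k
    have := (EuclideanSpace.proj k).hasFDerivAt.comp_hasDerivAt t (hη t)
    exact this
  -- derivative of each integral term
  have hint : ∀ k : Fin m,
      HasDerivAt (fun s => ∫ ξ in (0:ℝ)..(η s k), g k ξ)
        (g k (η t k) * η' t k) t := by
    intro k
    have hF : HasDerivAt (fun x => ∫ ξ in (0:ℝ)..x, g k ξ) (g k (η t k)) (η t k) :=
      intervalIntegral.integral_hasDerivAt_right
        ((hg k).intervalIntegrable _ _)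
        ((hg k).stronglyMeasurableAtFilter _ _)
        (hg k).continuousAt
    exact hF.comp t (hcoord k)
  have hsum : HasDerivAt (fun s => ∑ k : Fin m, ∫ ξ in (0:ℝ)..(η s k), g k ξ)
      (∑ k : Fin m, g k (η t k) * η' t k) t :=
    HasDerivAt.fun_sum fun k _ => hint k
  have hinner : HasDerivAt (fun s => ⟪η s, ζ s⟫)
      (⟪η t, ζ' t⟫ + ⟪η' t, ζ t⟫) t := (hη t).inner ℝ (hζ t)
  refine ⟨_, (((hVp t).add (hVc t)).sub hinner).sub hsum, ?_, ?_⟩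
  · have h1 := hNI t
    have h2 := hOSNI t
    have e1 : ⟪up t, η' t⟫ = ⟪ζ t, η' t⟫ + ∑ k : Fin m, g k (η t k) * η' t k := by
      simp only [PiLp.inner_apply, RCLike.inner_apply, conj_trivial]
      rw [← Finset.sum_add_distrib]
      refine Finset.sum_congr rfl fun k _ => ?_
      rw [hup t k]; ring
    have e2 : ⟪uc t, ζ' t⟫ = ⟪η t, ζ' t⟫ := by rw [huc]
    have e3 : ⟪η' t, ζ t⟫ = ⟪ζ t, η' t⟫ := real_inner_comm _ _
    rw [e1] at h1
    rw [e2] at h2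
    rw [e3]
    linarith
  · have : 0 ≤ ε * ‖ζ' t‖ ^ 2 := by positivity
    linarith
end

section
/- Core networked dissipation inequality of Theorem 3 (Eq. (19)): Let N, L, m be positive integers, Q an N × L real matrix (the incidence matrix of the network), and for each node i ∈ {1,…,N} let ε_i > 0, let y_i : ℝ → ℝ^m be a differentiable curve (the node output trajectory) and V_{pi} : ℝ → ℝ differentiable (node storage along the trajectory). For each edge l ∈ {1,…,L} let ζ_l : ℝ → ℝ^m be differentiable (state-dependent part of the edge-controller output), V_{cl} : ℝ → ℝ differentiable, and g_{l,1},…,g_{l,m} : ℝ → ℝ continuous (channel-wise edge feedthrough). Define the edge inputs ŷ_l(t) = Σ_{i=1}^N Q_{il} y_i(t), the edge outputs y_{cl}(t) = ζ_l(t) + (g_{l,1}(ŷ_{l,1}(t)),…,g_{l,m}(ŷ_{l,m}(t))), and the node inputs u_{pi}(t) = Σ_{l=1}^L Q_{il} y_{cl}(t). Assume for all t: V_{pi}'(t) ≤ ⟨u_{pi}(t), y_i'(t)⟩ − ε_i‖y_i'(t)‖² for every node i (OSNI nodes) and V_{cl}'(t) ≤ ⟨ŷ_l(t), ζ_l'(t)⟩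 for every edge l (NI edges). Then, with ε_min = min_i ε_i > 0, the function Ŵ(t) = Σ_i V_{pi}(t) + Σ_l V_{cl}(t) − Σ_l ⟨ŷ_l(t), ζ_l(t)⟩ − Σ_l Σ_{k=1}^m ∫_0^{ŷ_{l,k}(t)} g_{l,k}(ξ) dξ is differentiable at every t and satisfies Ŵ'(t) ≤ −ε_min Σ_{i=1}^N ‖y_i'(t)‖² ≤ 0. -/
open scoped RealInnerProductSpace

private lemma euc_sum_apply {m : ℕ} {α : Type*} (s : Finset α)
    (f : α → EuclideanSpace ℝ (Fin m)) (k : Fin m) :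
    (∑ i ∈ s, f i) k = ∑ i ∈ s, f i k := by
  rw [WithLp.ofLp_sum]; exact Finset.sum_apply k s _

private lemma euc_inner_eq {m : ℕ} (x y : EuclideanSpace ℝ (Fin m)) :
    ⟪x, y⟫ = ∑ k, x k * y k := by
  simp [PiLp.inner_apply, RCLike.inner_apply, mul_comm]

/-- Core networked dissipation inequality of Theorem 3 (Eq. (19)):
OSNI node plants with NI edge controllers interconnected through the
incidence matrix `Q`. -/
theorem stmt_2 (N L m : ℕ) (hN : 0 < N) (hL : 0 < L) (hm : 0 < m)
    (Q : Matrix (Fin N) (Fin L) ℝ)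
    (ε : Fin N → ℝ) (hε : ∀ i, 0 < ε i)
    (y y' : Fin N → ℝ → EuclideanSpace ℝ (Fin m))
    (hy : ∀ i t, HasDerivAt (y i) (y' i t) t)
    (Vp Vp' : Fin N → ℝ → ℝ)
    (hVp : ∀ i t, HasDerivAt (Vp i) (Vp' i t) t)
    (ζ ζ' : Fin L → ℝ → EuclideanSpace ℝ (Fin m))
    (hζ : ∀ l t, HasDerivAt (ζ l) (ζ' l t) t)
    (Vc Vc' : Fin L → ℝ → ℝ)
    (hVc : ∀ l t, HasDerivAt (Vc l) (Vc' l t) t)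
    (g : Fin L → Fin m → ℝ → ℝ) (hg : ∀ l k, Continuous (g l k))
    (yhat : Fin L → ℝ → EuclideanSpace ℝ (Fin m))
    (hyhat : ∀ l t, yhat l t = ∑ i : Fin N, Q i l • y i t)
    (yc : Fin L → ℝ → EuclideanSpace ℝ (Fin m))
    (hyc : ∀ l t k, yc l t k = ζ l t k + g l k (yhat l t k))
    (up : Fin N → ℝ → EuclideanSpace ℝ (Fin m))
    (hup : ∀ i t, up i t = ∑ l : Fin L, Q i l • yc l t)
    (hOSNI : ∀ i t, Vp' i t ≤ ⟪up i t, y' i t⟫ - ε i * ‖y' i t‖ ^ 2)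
    (hNI : ∀ l t, Vc' l t ≤ ⟪yhat l t, ζ' l t⟫)
    (εmin : ℝ)
    (hεmin : εmin = Finset.univ.inf' (Finset.univ_nonempty_iff.mpr ⟨⟨0, hN⟩⟩) ε) :
    0 < εmin ∧
    ∀ t : ℝ, ∃ w : ℝ,
      HasDerivAt
        (fun s => (∑ i : Fin N, Vp i s) + (∑ l : Fin L, Vc l s)
          - (∑ l : Fin L, ⟪yhat l s, ζ l s⟫)
          - ∑ l : Fin L, ∑ k : Fin m, ∫ ξ in (0:ℝ)..(yhat l s k), g l k ξ) w t ∧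
      w ≤ -εmin * ∑ i : Fin N, ‖y' i t‖ ^ 2 ∧
      -εmin * ∑ i : Fin N, ‖y' i t‖ ^ 2 ≤ 0 := by
  have hεpos : 0 < εmin := by
    rw [hεmin]
    exact (Finset.lt_inf'_iff _).mpr fun i _ => hε i
  have hεle : ∀ i, εmin ≤ ε i := fun i => by
    rw [hεmin]; exact Finset.inf'_le _ (Finset.mem_univ i)
  refine ⟨hεpos, fun t => ?_⟩
  -- derivative of yhat
  set yh' : Fin L → EuclideanSpace ℝ (Fin m) := fun l => ∑ i : Fin N, Q i l • y' i t with hyh'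
  have hyhd : ∀ l, HasDerivAt (yhat l) (yh' l) t := by
    intro l
    have h1 : HasDerivAt (fun s => ∑ i : Fin N, Q i l • y i s)
        (∑ i : Fin N, Q i l • y' i t) t :=
      HasDerivAt.fun_sum fun i _ => (hy i t).const_smul (Q i l)
    have h2 : yhat l = fun s => ∑ i : Fin N, Q i l • y i s := funext fun s => hyhat l s
    rw [h2]; exact h1
  -- coordinate derivatives
  have hyhk : ∀ l k, HasDerivAt (fun s => yhat l s k) (yh' l k) t := by
    intro l k
    have := (EuclideanSpace.proj k (𝕜 := ℝ)).hasFDerivAt.comp_hasDerivAt t (hyhd l)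
    exact this
  -- derivative of the integral term
  have hint : ∀ l k, HasDerivAt (fun s => ∫ ξ in (0:ℝ)..(yhat l s k), g l k ξ)
      (g l k (yhat l t k) * yh' l k) t := by
    intro l k
    have hF : HasDerivAt (fun x => ∫ ξ in (0:ℝ)..x, g l k ξ) (g l k (yhat l t k)) (yhat l t k) :=
      intervalIntegral.integral_hasDerivAt_right ((hg l k).intervalIntegrable _ _)
        ((hg l k).stronglyMeasurableAtFilter _ _) (hg l k).continuousAt
    exact hF.comp t (hyhk l k)
  -- derivative of the whole function
  set w : ℝ := (∑ i : Fin N, Vp' i t) + (∑ l : Fin L, Vc' l t)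
      - (∑ l : Fin L, (⟪yhat l t, ζ' l t⟫ + ⟪yh' l, ζ l t⟫))
      - ∑ l : Fin L, ∑ k : Fin m, g l k (yhat l t k) * yh' l k with hw
  have hW : HasDerivAt
      (fun s => (∑ i : Fin N, Vp i s) + (∑ l : Fin L, Vc l s)
        - (∑ l : Fin L, ⟪yhat l s, ζ l s⟫)
        - ∑ l : Fin L, ∑ k : Fin m, ∫ ξ in (0:ℝ)..(yhat l s k), g l k ξ) w t := by
    have hA : HasDerivAt (fun s => ∑ i : Fin N, Vp i s) (∑ i : Fin N, Vp' i t) t :=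
      HasDerivAt.fun_sum fun i _ => hVp i t
    have hB : HasDerivAt (fun s => ∑ l : Fin L, Vc l s) (∑ l : Fin L, Vc' l t) t :=
      HasDerivAt.fun_sum fun l _ => hVc l t
    have hC : HasDerivAt (fun s => ∑ l : Fin L, ⟪yhat l s, ζ l s⟫)
        (∑ l : Fin L, (⟪yhat l t, ζ' l t⟫ + ⟪yh' l, ζ l t⟫)) t :=
      HasDerivAt.fun_sum fun l _ => (hyhd l).inner ℝ (hζ l t)
    have hD : HasDerivAt (fun s => ∑ l : Fin L, ∑ k : Fin m, ∫ ξ in (0:ℝ)..(yhat l s k), g l k ξ)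
        (∑ l : Fin L, ∑ k : Fin m, g l k (yhat l t k) * yh' l k) t :=
      HasDerivAt.fun_sum fun l _ => HasDerivAt.fun_sum fun k _ => hint l k
    exact ((hA.add hB).sub hC).sub hD
  refine ⟨w, hW, ?_, ?_⟩
  · -- the dissipation inequality
    have hyh'k : ∀ l k, yh' l k = ∑ i : Fin N, Q i l * y' i t k := fun l k =>
      euc_sum_apply Finset.univ (fun i => Q i l • y' i t) k
    have key : (∑ i : Fin N, ⟪up i t, y' i t⟫)
        = (∑ l : Fin L, ⟪yh' l, ζ l t⟫)
          + ∑ l : Fin L, ∑ k : Fin m, g l k (yhat l t k) * yh' l k := by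
      have lhs : (∑ i : Fin N, ⟪up i t, y' i t⟫)
          = ∑ i : Fin N, ∑ k : Fin m, ∑ l : Fin L,
              Q i l * ((ζ l t k + g l k (yhat l t k)) * y' i t k) := by
        refine Finset.sum_congr rfl fun i _ => ?_
        rw [euc_inner_eq]
        refine Finset.sum_congr rfl fun k _ => ?_
        rw [hup, euc_sum_apply, Finset.sum_mul]
        refine Finset.sum_congr rfl fun l _ => ?_
        have : (Q i l • yc l t) k = Q i l * yc l t k := rfl
        rw [this, hyc]; ring
      have rhs1 : (∑ l : Fin L, ⟪yh' l, ζ l t⟫)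
          = ∑ l : Fin L, ∑ k : Fin m, ∑ i : Fin N, Q i l * (ζ l t k * y' i t k) := by
        refine Finset.sum_congr rfl fun l _ => ?_
        rw [euc_inner_eq]
        refine Finset.sum_congr rfl fun k _ => ?_
        rw [hyh'k, Finset.sum_mul]
        exact Finset.sum_congr rfl fun i _ => by ring
      have rhs2 : (∑ l : Fin L, ∑ k : Fin m, g l k (yhat l t k) * yh' l k)
          = ∑ l : Fin L, ∑ k : Fin m, ∑ i : Fin N,
              Q i l * (g l k (yhat l t k) * y' i t k) := by
        refine Finset.sum_congr rfl fun l _ => Finset.sum_congr rfl fun k _ => ?_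
        rw [hyh'k, Finset.mul_sum]
        exact Finset.sum_congr rfl fun i _ => by ring
      rw [lhs, rhs1, rhs2, ← Finset.sum_add_distrib]
      have hcomb : ∀ l : Fin L,
          ((∑ k : Fin m, ∑ i : Fin N, Q i l * (ζ l t k * y' i t k))
            + ∑ k : Fin m, ∑ i : Fin N, Q i l * (g l k (yhat l t k) * y' i t k))
          = ∑ k : Fin m, ∑ i : Fin N,
              Q i l * ((ζ l t k + g l k (yhat l t k)) * y' i t k) := fun l => by
        rw [← Finset.sum_add_distrib]
        refine Finset.sum_congr rfl fun k _ => ?_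
        rw [← Finset.sum_add_distrib]
        exact Finset.sum_congr rfl fun i _ => by ring
      simp only [hcomb]
      calc (∑ i : Fin N, ∑ k : Fin m, ∑ l : Fin L,
              Q i l * ((ζ l t k + g l k (yhat l t k)) * y' i t k))
          = ∑ k : Fin m, ∑ i : Fin N, ∑ l : Fin L,
              Q i l * ((ζ l t k + g l k (yhat l t k)) * y' i t k) := Finset.sum_comm
        _ = ∑ k : Fin m, ∑ l : Fin L, ∑ i : Fin N,
              Q i l * ((ζ l t k + g l k (yhat l t k)) * y' i t k) :=
            Finset.sum_congr rfl fun k _ => Finset.sum_comm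
        _ = ∑ l : Fin L, ∑ k : Fin m, ∑ i : Fin N,
              Q i l * ((ζ l t k + g l k (yhat l t k)) * y' i t k) := Finset.sum_comm
    have hOS : (∑ i : Fin N, Vp' i t)
        ≤ (∑ i : Fin N, ⟪up i t, y' i t⟫) - ∑ i : Fin N, ε i * ‖y' i t‖ ^ 2 := by
      rw [← Finset.sum_sub_distrib]
      exact Finset.sum_le_sum fun i _ => hOSNI i t
    have hN2 : (∑ l : Fin L, Vc' l t) ≤ ∑ l : Fin L, ⟪yhat l t, ζ' l t⟫ :=
      Finset.sum_le_sum fun l _ => hNI l t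
    have hsplit : (∑ l : Fin L, (⟪yhat l t, ζ' l t⟫ + ⟪yh' l, ζ l t⟫))
        = (∑ l : Fin L, ⟪yhat l t, ζ' l t⟫) + ∑ l : Fin L, ⟪yh' l, ζ l t⟫ :=
      Finset.sum_add_distrib
    have hemin : εmin * (∑ i : Fin N, ‖y' i t‖ ^ 2) ≤ ∑ i : Fin N, ε i * ‖y' i t‖ ^ 2 := by
      rw [Finset.mul_sum]
      exact Finset.sum_le_sum fun i _ =>
        mul_le_mul_of_nonneg_right (hεle i) (sq_nonneg _)
    rw [hw, hsplit]
    nlinarith [key, hOS, hN2, hemin]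
  · have hsum : (0:ℝ) ≤ ∑ i : Fin N, ‖y' i t‖ ^ 2 :=
      Finset.sum_nonneg fun i _ => sq_nonneg _
    nlinarith [hεpos, hsum]
end

section
/- Core networked dissipation inequality of Theorem 4: Let N, L, m be positive integers, Q an N × L real matrix (the incidence matrix of the network). For each node i ∈ {1,…,N} let y_i : ℝ → ℝ^m be differentiable and V_{pi} : ℝ → ℝ differentiable. For each edge l ∈ {1,…,L} let ε_l > 0, ζ_l : ℝ → ℝ^m differentiable, V_{cl} : ℝ → ℝ differentiable, and g_{l,1},…,g_{l,m} : ℝ → ℝ continuous. Define ŷ_l(t) = Σ_{i=1}^N Q_{il} y_i(t), y_{cl}(t) = ζ_l(t) + (g_{l,1}(ŷ_{l,1}(t)),…,g_{l,m}(ŷ_{l,m}(t))), and u_{pi}(t) = Σ_{l=1}^L Q_{il} y_{cl}(t). Assume for all t: V_{pi}'(t) ≤ ⟨u_{pi}(t), y_i'(t)⟩ for every node i (NI nodes) and V_{cl}'(t) ≤ ⟨ŷ_l(t), ζ_l'(t)⟩ − ε_l‖ζ_l'(t)‖² for every edge l (OSNI edges). Then, with ε_{c,min} = min_l ε_l > 0,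 the function Ŵ(t) = Σ_i V_{pi}(t) + Σ_l V_{cl}(t) − Σ_l ⟨ŷ_l(t), ζ_l(t)⟩ − Σ_l Σ_{k=1}^m ∫_0^{ŷ_{l,k}(t)} g_{l,k}(ξ) dξ is differentiable at every t and satisfies Ŵ'(t) ≤ −ε_{c,min} Σ_{l=1}^L ‖ζ_l'(t)‖² ≤ 0. -/
open scoped RealInnerProductSpace

/-- Core networked dissipation inequality of Theorem 4:
NI node plants with OSNI edge controllers interconnected through the
incidence matrix `Q`. -/
theorem stmt_3 (N L m : ℕ) (hN : 0 < N) (hL : 0 < L) (hm : 0 < m)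
    (Q : Matrix (Fin N) (Fin L) ℝ)
    (y y' : Fin N → ℝ → EuclideanSpace ℝ (Fin m))
    (hy : ∀ i t, HasDerivAt (y i) (y' i t) t)
    (Vp Vp' : Fin N → ℝ → ℝ)
    (hVp : ∀ i t, HasDerivAt (Vp i) (Vp' i t) t)
    (ε : Fin L → ℝ) (hε : ∀ l, 0 < ε l)
    (ζ ζ' : Fin L → ℝ → EuclideanSpace ℝ (Fin m))
    (hζ : ∀ l t, HasDerivAt (ζ l) (ζ' l t) t)
    (Vc Vc' : Fin L → ℝ → ℝ)
    (hVc : ∀ l t, HasDerivAt (Vc l) (Vc' l t) t)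
    (g : Fin L → Fin m → ℝ → ℝ) (hg : ∀ l k, Continuous (g l k))
    (yhat : Fin L → ℝ → EuclideanSpace ℝ (Fin m))
    (hyhat : ∀ l t, yhat l t = ∑ i : Fin N, Q i l • y i t)
    (yc : Fin L → ℝ → EuclideanSpace ℝ (Fin m))
    (hyc : ∀ l t k, yc l t k = ζ l t k + g l k (yhat l t k))
    (up : Fin N → ℝ → EuclideanSpace ℝ (Fin m))
    (hup : ∀ i t, up i t = ∑ l : Fin L, Q i l • yc l t)
    (hNI : ∀ i t, Vp' i t ≤ ⟪up i t, y' i t⟫)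
    (hOSNI : ∀ l t, Vc' l t ≤ ⟪yhat l t, ζ' l t⟫ - ε l * ‖ζ' l t‖ ^ 2)
    (εcmin : ℝ)
    (hεcmin : εcmin = Finset.univ.inf' (Finset.univ_nonempty_iff.mpr ⟨⟨0, hL⟩⟩) ε) :
    0 < εcmin ∧
    ∀ t : ℝ, ∃ w : ℝ,
      HasDerivAt
        (fun s => (∑ i : Fin N, Vp i s) + (∑ l : Fin L, Vc l s)
          - (∑ l : Fin L, ⟪yhat l s, ζ l s⟫)
          - ∑ l : Fin L, ∑ k : Fin m, ∫ ξ in (0:ℝ)..(yhat l s k), g l k ξ) w t ∧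
      w ≤ -εcmin * ∑ l : Fin L, ‖ζ' l t‖ ^ 2 ∧
      -εcmin * ∑ l : Fin L, ‖ζ' l t‖ ^ 2 ≤ 0 := by
  have hεmin_pos : 0 < εcmin := by
    rw [hεcmin]
    exact (Finset.lt_inf'_iff _).2 fun l _ => hε l
  have hεmin_le : ∀ l : Fin L, εcmin ≤ ε l := by
    intro l
    rw [hεcmin]
    exact Finset.inf'_le _ (Finset.mem_univ l)
  refine ⟨hεmin_pos, fun t => ?_⟩
  -- derivative of yhat
  set yhat' : Fin L → ℝ → EuclideanSpace ℝ (Fin m) :=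
    fun l t => ∑ i : Fin N, Q i l • y' i t with hyhat'def
  have hyhat' : ∀ l t, HasDerivAt (yhat l) (yhat' l t) t := by
    intro l t
    have heq : yhat l = fun s => ∑ i : Fin N, Q i l • y i s := funext (hyhat l)
    rw [heq]
    exact HasDerivAt.fun_sum fun i _ => (hy i t).const_smul (Q i l)
  -- derivative of components of yhat
  have hcomp : ∀ l k, HasDerivAt (fun s => yhat l s k) (yhat' l t k) t := by
    intro l k
    have := ((EuclideanSpace.proj k :
        EuclideanSpace ℝ (Fin m) →L[ℝ] ℝ).hasFDerivAt.comp_hasDerivAt t (hyhat' l t))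
    simp at this; exact this
  -- derivative of the inner product terms
  have hinner : ∀ l, HasDerivAt (fun s => ⟪yhat l s, ζ l s⟫)
      (⟪yhat l t, ζ' l t⟫ + ⟪yhat' l t, ζ l t⟫) t :=
    fun l => HasDerivAt.inner ℝ (hyhat' l t) (hζ l t)
  -- derivative of the integral terms
  have hInt : ∀ l k, HasDerivAt (fun s => ∫ ξ in (0:ℝ)..(yhat l s k), g l k ξ)
      (g l k (yhat l t k) * yhat' l t k) t := by
    intro l k
    have hFTC : HasDerivAt (fun u => ∫ ξ in (0:ℝ)..u, g l k ξ) (g l k (yhat l t k))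
        (yhat l t k) :=
      intervalIntegral.integral_hasDerivAt_right
        ((hg l k).intervalIntegrable _ _)
        ((hg l k).stronglyMeasurableAtFilter _ _)
        (hg l k).continuousAt
    exact hFTC.comp t (hcomp l k)
  -- total derivative
  set w : ℝ := (∑ i : Fin N, Vp' i t) + (∑ l : Fin L, Vc' l t)
    - (∑ l : Fin L, (⟪yhat l t, ζ' l t⟫ + ⟪yhat' l t, ζ l t⟫))
    - ∑ l : Fin L, ∑ k : Fin m, g l k (yhat l t k) * yhat' l t k with hw
  have hA : HasDerivAt (fun s => ∑ i : Fin N, Vp i s) (∑ i : Fin N, Vp' i t) t :=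
    HasDerivAt.fun_sum fun i _ => hVp i t
  have hB : HasDerivAt (fun s => ∑ l : Fin L, Vc l s) (∑ l : Fin L, Vc' l t) t :=
    HasDerivAt.fun_sum fun l _ => hVc l t
  have hC : HasDerivAt (fun s => ∑ l : Fin L, ⟪yhat l s, ζ l s⟫)
      (∑ l : Fin L, (⟪yhat l t, ζ' l t⟫ + ⟪yhat' l t, ζ l t⟫)) t :=
    HasDerivAt.fun_sum fun l _ => hinner l
  have hD : HasDerivAt
      (fun s => ∑ l : Fin L, ∑ k : Fin m, ∫ ξ in (0:ℝ)..(yhat l s k), g l k ξ)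
      (∑ l : Fin L, ∑ k : Fin m, g l k (yhat l t k) * yhat' l t k) t :=
    HasDerivAt.fun_sum fun l _ => HasDerivAt.fun_sum fun k _ => hInt l k
  refine ⟨w, ((hA.add hB).sub hC).sub hD, ?_, ?_⟩
  · -- the inequality
    have h1 : ∀ l : Fin L, (∑ k : Fin m, g l k (yhat l t k) * yhat' l t k)
        = ⟪yc l t, yhat' l t⟫ - ⟪ζ l t, yhat' l t⟫ := by
      intro l
      rw [← inner_sub_left, PiLp.inner_apply]
      apply Finset.sum_congr rfl
      intro k _
      simp [hyc l t k, RCLike.inner_apply, mul_comm]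
    have h2 : (∑ l : Fin L, ⟪yc l t, yhat' l t⟫) = ∑ i : Fin N, ⟪up i t, y' i t⟫ := by
      simp only [hyhat'def, hup, inner_sum, sum_inner, real_inner_smul_left,
        real_inner_smul_right]
      exact Finset.sum_comm
    have hkey : (∑ l : Fin L, ∑ k : Fin m, g l k (yhat l t k) * yhat' l t k)
        = (∑ i : Fin N, ⟪up i t, y' i t⟫) - ∑ l : Fin L, ⟪ζ l t, yhat' l t⟫ := by
      rw [Finset.sum_congr rfl fun l _ => h1 l, Finset.sum_sub_distrib, h2]
    have hcommC : (∑ l : Fin L, (⟪yhat l t, ζ' l t⟫ + ⟪yhat' l t, ζ l t⟫))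
        = (∑ l : Fin L, ⟪yhat l t, ζ' l t⟫) + ∑ l : Fin L, ⟪ζ l t, yhat' l t⟫ := by
      rw [Finset.sum_add_distrib]
      congr 1
      exact Finset.sum_congr rfl fun l _ => real_inner_comm _ _
    have hwval : w = ((∑ i : Fin N, Vp' i t) - ∑ i : Fin N, ⟪up i t, y' i t⟫)
        + ((∑ l : Fin L, Vc' l t) - ∑ l : Fin L, ⟪yhat l t, ζ' l t⟫) := by
      rw [hw, hkey, hcommC]; ring
    have hp : (∑ i : Fin N, Vp' i t) - (∑ i : Fin N, ⟪up i t, y' i t⟫) ≤ 0 := by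
      rw [sub_nonpos]
      exact Finset.sum_le_sum fun i _ => hNI i t
    have hc : (∑ l : Fin L, Vc' l t) - (∑ l : Fin L, ⟪yhat l t, ζ' l t⟫)
        ≤ -εcmin * ∑ l : Fin L, ‖ζ' l t‖ ^ 2 := by
      rw [← Finset.sum_sub_distrib]
      have : ∀ l : Fin L, Vc' l t - ⟪yhat l t, ζ' l t⟫ ≤ -εcmin * ‖ζ' l t‖ ^ 2 := by
        intro l
        have h := hOSNI l t
        have h2 : εcmin * ‖ζ' l t‖ ^ 2 ≤ ε l * ‖ζ' l t‖ ^ 2 :=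
          mul_le_mul_of_nonneg_right (hεmin_le l) (sq_nonneg _)
        nlinarith
      calc (∑ l : Fin L, (Vc' l t - ⟪yhat l t, ζ' l t⟫))
          ≤ ∑ l : Fin L, -εcmin * ‖ζ' l t‖ ^ 2 := Finset.sum_le_sum fun l _ => this l
        _ = -εcmin * ∑ l : Fin L, ‖ζ' l t‖ ^ 2 := by rw [Finset.mul_sum]
    calc w = _ := hwval
      _ ≤ 0 + (-εcmin * ∑ l : Fin L, ‖ζ' l t‖ ^ 2) := add_le_add hp hc
      _ = -εcmin * ∑ l : Fin L, ‖ζ' l t‖ ^ 2 := by ring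
  · have hsum_nonneg : 0 ≤ ∑ l : Fin L, ‖ζ' l t‖ ^ 2 :=
      Finset.sum_nonneg fun l _ => sq_nonneg _
    nlinarith
end

section
/- Lyapunov dissipation for the interconnected swing equations (core computation of Theorem 5): Let N, L be positive integers and Q an N × L real matrix (the incidence matrix of the transmission network). For each bus i let M_i > 0 and D_i > 0, and let δ_i : ℝ → ℝ be twice differentiable (the rotor angle deviation). For each line l let P̄_l > 0 and ψ̄_l ∈ ℝ. Define the line angle deviations ψ̃_l(t) = Σ_{i=1}^N Q_{il} δ_i(t) and the line outputs y_l(t) = P̄_l (sin ψ̄_l − sin(ψ̃_l(t) + ψ̄_l)). Assume the interconnected swing dynamics M_i δ_i''(t) + D_i δ_i'(t) = Σ_{l=1}^L Q_{il} y_l(t) hold for all i and all t. Then the function W(t) = Σ_{i=1}^N (M_i/2) δ_i'(t)² + Σ_{l=1}^L P̄_l ( cos ψ̄_l − ψ̃_l(t) sin ψ̄_l − cos(ψ̃_l(t) + ψ̄_l) ) is differentiable at every t with derivative W'(t) = − Σ_{i=1}^N D_i δ_i'(t)² ≤ 0. -/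
open Real

/-- Lyapunov dissipation for the interconnected swing equations
(core computation of Theorem 5). -/
theorem stmt_4 (N L : ℕ) (hN : 0 < N) (hL : 0 < L)
    (Q : Matrix (Fin N) (Fin L) ℝ)
    (M D : Fin N → ℝ) (hM : ∀ i, 0 < M i) (hD : ∀ i, 0 < D i)
    (δ δ' δ'' : Fin N → ℝ → ℝ)
    (hδ : ∀ i t, HasDerivAt (δ i) (δ' i t) t)
    (hδ' : ∀ i t, HasDerivAt (δ' i) (δ'' i t) t)
    (P ψ : Fin L → ℝ) (hP : ∀ l, 0 < P l)
    (ψt : Fin L → ℝ → ℝ)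
    (hψt : ∀ l t, ψt l t = ∑ i : Fin N, Q i l * δ i t)
    (y : Fin L → ℝ → ℝ)
    (hy : ∀ l t, y l t = P l * (sin (ψ l) - sin (ψt l t + ψ l)))
    (hswing : ∀ i t, M i * δ'' i t + D i * δ' i t = ∑ l : Fin L, Q i l * y l t) :
    ∀ t : ℝ,
      HasDerivAt
        (fun s => (∑ i : Fin N, M i / 2 * (δ' i s) ^ 2) +
          ∑ l : Fin L, P l * (cos (ψ l) - ψt l s * sin (ψ l) - cos (ψt l s + ψ l)))
        (-∑ i : Fin N, D i * (δ' i t) ^ 2) t ∧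
      (-∑ i : Fin N, D i * (δ' i t) ^ 2) ≤ 0 := by
  intro t
  constructor
  · have hv : ∀ l, HasDerivAt (ψt l) (∑ i, Q i l * δ' i t) t := by
      intro l
      have hfun : ψt l = fun s => ∑ i, Q i l * δ i s := funext (hψt l)
      rw [hfun]
      exact HasDerivAt.fun_sum fun i _ => (hδ i t).const_mul _
    have h1 : HasDerivAt (fun s => ∑ i : Fin N, M i / 2 * (δ' i s) ^ 2)
        (∑ i : Fin N, M i * (δ' i t * δ'' i t)) t := by
      apply HasDerivAt.fun_sum
      intro i _
      have := ((hδ' i t).pow 2).const_mul (M i / 2)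
      refine this.congr_deriv ?_
      push_cast
      ring
    have h2 : HasDerivAt
        (fun s => ∑ l : Fin L, P l * (cos (ψ l) - ψt l s * sin (ψ l) - cos (ψt l s + ψ l)))
        (∑ l : Fin L, -((∑ i, Q i l * δ' i t) * y l t)) t := by
      apply HasDerivAt.fun_sum
      intro l _
      have hc : HasDerivAt (fun s => cos (ψt l s + ψ l))
          (-sin (ψt l t + ψ l) * (∑ i, Q i l * δ' i t)) t := ((hv l).add_const _).cos
      have hm : HasDerivAt (fun s => ψt l s * sin (ψ l))
          ((∑ i, Q i l * δ' i t) * sin (ψ l)) t := (hv l).mul_const _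
      have := (((hasDerivAt_const t (cos (ψ l))).sub hm).sub hc).const_mul (P l)
      refine this.congr_deriv ?_
      rw [hy]
      ring
    have hsum := h1.fun_add h2
    refine hsum.congr_deriv ?_
    have e1 : ∑ l : Fin L, -((∑ i, Q i l * δ' i t) * y l t)
        = ∑ i : Fin N, ∑ l : Fin L, -(Q i l * δ' i t * y l t) := by
      rw [Finset.sum_comm]
      refine Finset.sum_congr rfl fun l _ => ?_
      rw [Finset.sum_mul, ← Finset.sum_neg_distrib]
    have e2 : ∀ i, ∑ l : Fin L, -(Q i l * δ' i t * y l t)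
        = -(δ' i t * (M i * δ'' i t + D i * δ' i t)) := by
      intro i
      rw [hswing i t, Finset.mul_sum, ← Finset.sum_neg_distrib]
      refine Finset.sum_congr rfl fun l _ => by ring
    rw [e1, Finset.sum_congr rfl fun i _ => e2 i, ← Finset.sum_add_distrib,
      ← Finset.sum_neg_distrib]
    refine Finset.sum_congr rfl fun i _ => by ring
  · apply neg_nonpos_of_nonneg
    exact Finset.sum_nonneg fun i _ => mul_nonneg (hD i).le (sq_nonneg _)
end

section
/- Lyapunov dissipation for the swing network with a battery-based NI edge controller on one line (core computation of Theorem 6): Let N, L be positive integers, Q an N × L real matrix (the incidence matrix), and k ∈ {1,…,L} a distinguished line. For each bus i let M_i > 0, D_i > 0 and δ_i : ℝ → ℝ twice differentiable. For each line l ≠ k let P̄_l > 0 and ψ̄_l ∈ ℝ. Let τ > 0 and K₂ > K₁ > 0, and let x : ℝ → ℝ be differentiable (the controller state on line k). Define ψ̃_l(t) = Σ_{i=1}^N Q_{il} δ_i(t) for every l, the line outputs y_l(t) = P̄_l(sin ψ̄_l − sin(ψ̃_l(t) + ψ̄_l)) for l ≠ k, and y_k(t) = x(t) − K₂ ψ̃_k(t).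 Assume for all t: τ x'(t) = −x(t) + K₁ ψ̃_k(t) and M_i δ_i''(t) + D_i δ_i'(t) = Σ_{l=1}^L Q_{il} y_l(t) for every i. Then the function W(t) = Σ_{i=1}^N (M_i/2) δ_i'(t)² + Σ_{l ≠ k} P̄_l( cos ψ̄_l − ψ̃_l(t) sin ψ̄_l − cos(ψ̃_l(t) + ψ̄_l) ) + x(t)²/(2K₁) − ψ̃_k(t) x(t) + (K₂/2) ψ̃_k(t)² is differentiable at every t with derivative W'(t) = − Σ_{i=1}^N D_i δ_i'(t)² − (τ/K₁) x'(t)² ≤ 0. -/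
open Real

/-- Lyapunov dissipation for the swing network with a battery-based NI edge
controller on one distinguished line `k` (core computation of Theorem 6). -/
theorem stmt_5 (N L : ℕ) (hN : 0 < N) (hL : 0 < L)
    (Q : Matrix (Fin N) (Fin L) ℝ) (k : Fin L)
    (M D : Fin N → ℝ) (hM : ∀ i, 0 < M i) (hD : ∀ i, 0 < D i)
    (δ δ' δ'' : Fin N → ℝ → ℝ)
    (hδ : ∀ i t, HasDerivAt (δ i) (δ' i t) t)
    (hδ' : ∀ i t, HasDerivAt (δ' i) (δ'' i t) t)
    (P ψ : Fin L → ℝ) (hP : ∀ l, l ≠ k → 0 < P l)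
    (τ K₁ K₂ : ℝ) (hτ : 0 < τ) (hK₁ : 0 < K₁) (hK₂ : K₁ < K₂)
    (x x' : ℝ → ℝ) (hx : ∀ t, HasDerivAt x (x' t) t)
    (ψt : Fin L → ℝ → ℝ)
    (hψt : ∀ l t, ψt l t = ∑ i : Fin N, Q i l * δ i t)
    (y : Fin L → ℝ → ℝ)
    (hy : ∀ l, l ≠ k → ∀ t, y l t = P l * (sin (ψ l) - sin (ψt l t + ψ l)))
    (hyk : ∀ t, y k t = x t - K₂ * ψt k t)
    (hctrl : ∀ t, τ * x' t = -x t + K₁ * ψt k t)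
    (hswing : ∀ i t, M i * δ'' i t + D i * δ' i t = ∑ l : Fin L, Q i l * y l t) :
    ∀ t : ℝ,
      HasDerivAt
        (fun s => (∑ i : Fin N, M i / 2 * (δ' i s) ^ 2)
          + (∑ l ∈ Finset.univ.erase k,
              P l * (cos (ψ l) - ψt l s * sin (ψ l) - cos (ψt l s + ψ l)))
          + x s ^ 2 / (2 * K₁) - ψt k s * x s + K₂ / 2 * (ψt k s) ^ 2)
        (-(∑ i : Fin N, D i * (δ' i t) ^ 2) - τ / K₁ * (x' t) ^ 2) t ∧
      (-(∑ i : Fin N, D i * (δ' i t) ^ 2) - τ / K₁ * (x' t) ^ 2) ≤ 0 := by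
  intro t
  set ψ' : Fin L → ℝ := fun l => ∑ i : Fin N, Q i l * δ' i t with hψ'
  have hψd : ∀ l, HasDerivAt (ψt l) (ψ' l) t := by
    intro l
    have h1 : HasDerivAt (fun s => ∑ i : Fin N, Q i l * δ i s) (ψ' l) t :=
      HasDerivAt.fun_sum fun i _ => (hδ i t).const_mul (Q i l)
    have he : ψt l = fun s => ∑ i : Fin N, Q i l * δ i s := funext (hψt l)
    rw [he]; exact h1
  -- kinetic part
  have hkin : HasDerivAt (fun s => ∑ i : Fin N, M i / 2 * (δ' i s) ^ 2)
      (∑ i : Fin N, M i * δ' i t * δ'' i t) t := by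
    apply HasDerivAt.fun_sum
    intro i _
    have h := ((hδ' i t).pow 2).const_mul (M i / 2)
    refine h.congr_deriv (Eq.symm ?_)
    ring
  -- potential part
  have hpot : HasDerivAt (fun s => ∑ l ∈ Finset.univ.erase k,
      P l * (cos (ψ l) - ψt l s * sin (ψ l) - cos (ψt l s + ψ l)))
      (∑ l ∈ Finset.univ.erase k, -(ψ' l * y l t)) t := by
    apply HasDerivAt.fun_sum
    intro l hl
    have hl' : l ≠ k := Finset.ne_of_mem_erase hl
    have h1 : HasDerivAt (fun s => ψt l s * sin (ψ l)) (ψ' l * sin (ψ l)) t :=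
      (hψd l).mul_const _
    have h2 : HasDerivAt (fun s => cos (ψt l s + ψ l))
        (-sin (ψt l t + ψ l) * ψ' l) t := by
      simpa using ((hψd l).add_const (ψ l)).cos
    have h3 := (((hasDerivAt_const t (cos (ψ l))).sub h1).sub h2).const_mul (P l)
    refine h3.congr_deriv (Eq.symm ?_)
    rw [hy l hl' t]; ring
  -- battery pieces
  have h1 : HasDerivAt (fun s => x s ^ 2 / (2 * K₁)) (x t * x' t / K₁) t := by
    have h := ((hx t).pow 2).div_const (2 * K₁)
    refine h.congr_deriv (Eq.symm ?_)
    field_simp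
    ring
  have h2 : HasDerivAt (fun s => ψt k s * x s) (ψ' k * x t + ψt k t * x' t) t :=
    (hψd k).mul (hx t)
  have h3 : HasDerivAt (fun s => K₂ / 2 * (ψt k s) ^ 2) (K₂ * ψt k t * ψ' k) t := by
    have h := ((hψd k).pow 2).const_mul (K₂ / 2)
    refine h.congr_deriv (Eq.symm ?_)
    ring
  have hW := (((hkin.add hpot).add h1).sub h2).add h3
  constructor
  · refine hW.congr_deriv (Eq.symm ?_)
    -- identify the derivative value
    have hswap : ∑ l : Fin L, ψ' l * y l t
        = ∑ i : Fin N, δ' i t * (M i * δ'' i t + D i * δ' i t) := by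
      calc ∑ l : Fin L, ψ' l * y l t
          = ∑ l : Fin L, ∑ i : Fin N, Q i l * δ' i t * y l t := by
            refine Finset.sum_congr rfl fun l _ => ?_
            rw [hψ']; rw [Finset.sum_mul]
        _ = ∑ i : Fin N, ∑ l : Fin L, Q i l * δ' i t * y l t := Finset.sum_comm
        _ = ∑ i : Fin N, δ' i t * ∑ l : Fin L, Q i l * y l t := by
            refine Finset.sum_congr rfl fun i _ => ?_
            rw [Finset.mul_sum]
            exact Finset.sum_congr rfl fun l _ => by ring
        _ = _ := Finset.sum_congr rfl fun i _ => by rw [hswing i t]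
    have herase : ∑ l ∈ Finset.univ.erase k, -(ψ' l * y l t)
        = -((∑ l : Fin L, ψ' l * y l t) - ψ' k * y k t) := by
      rw [Finset.sum_erase_eq_sub (Finset.mem_univ k), Finset.sum_neg_distrib]
      ring
    rw [herase, hswap]
    have hsplit : ∑ i : Fin N, δ' i t * (M i * δ'' i t + D i * δ' i t)
        = (∑ i : Fin N, M i * δ' i t * δ'' i t) + ∑ i : Fin N, D i * (δ' i t) ^ 2 := by
      rw [← Finset.sum_add_distrib]
      exact Finset.sum_congr rfl fun i _ => by ring
    rw [hsplit, hyk t]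
    have hc := hctrl t
    field_simp
    linear_combination (-(x' t)) * hc
  · have hs : 0 ≤ ∑ i : Fin N, D i * (δ' i t) ^ 2 :=
      Finset.sum_nonneg fun i _ => mul_nonneg (hD i).le (sq_nonneg _)
    have hx2 : 0 ≤ τ / K₁ * (x' t) ^ 2 :=
      mul_nonneg (div_nonneg hτ.le hK₁.le) (sq_nonneg _)
    linarith
end
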